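/- Let M, K ∈ ℕ with K ≥ 1, let w : Fin M → ℝ, and fix i ∈ Fin M. Let L_i := {j : j < i} and R_i := {j : j > i}. Then ∑_{S ⊆ (Fin M) \ {i}, |S| ≤ K−1} (∏_{j ∈ S} w j) · (∏_{j ∉ S ∪ {i}} (1 − w j)) = ∑_{k'=0}^{K−1} ∑_{j=0}^{k'} P_j(L_i) · P_{k'−j}(R_i), where P_k(A) := ∑_{S ⊆ A, |S| = k} (∏_{t ∈ S} w t) · (∏_{t ∈ A \ S} (1 − w t)). -/
import Mathlib

open Finset


/-- `subsetProb w k A` is the probability `P_k(A)` that exactly `k` points of `A` are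
sampled when each point `t` is included independently with probability `w t`. -/
def subsetProb {ι : Type*} [DecidableEq ι] (w : ι → ℝ) (k : ℕ) (A : Finset ι) : ℝ :=
  ∑ S ∈ A.powerset.filter (fun S => S.card = k),
    (∏ t ∈ S, w t) * ∏ t ∈ A \ S, (1 - w t)

lemma sum_filter_card_le {α : Type*} (P : Finset (Finset α)) (n : ℕ)
    (f : Finset α → ℝ) :
    ∑ S ∈ P.filter (fun S => S.card ≤ n), f S
      = ∑ k ∈ Finset.range (n+1), ∑ S ∈ P.filter (fun S => S.card = k), f S := by
  rw [← Finset.sum_fiberwise_of_maps_to (g := Finset.card) (t := Finset.range (n+1))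
      (fun S hS => by simp only [mem_filter] at hS; simp [Nat.lt_succ_iff, hS.2]) f]
  refine Finset.sum_congr rfl fun k hk => ?_
  rw [Finset.filter_filter]
  refine Finset.sum_congr (Finset.filter_congr fun S hS => ?_) fun _ _ => rfl
  simp only [mem_range] at hk
  constructor
  · exact fun h => h.2
  · intro h; omega

lemma subsetProb_union {ι : Type*} [DecidableEq ι] (w : ι → ℝ) (k : ℕ)
    {A B : Finset ι} (hAB : Disjoint A B) :
    subsetProb w k (A ∪ B)
      = ∑ j ∈ Finset.range (k+1), subsetProb w j A * subsetProb w (k-j) B := by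
  unfold subsetProb
  have key : ∑ S ∈ (A ∪ B).powerset.filter (fun S => S.card = k),
      (∏ t ∈ S, w t) * ∏ t ∈ (A ∪ B) \ S, (1 - w t)
      = ∑ p ∈ (A.powerset ×ˢ B.powerset).filter (fun p => p.1.card + p.2.card = k),
        ((∏ t ∈ p.1, w t) * ∏ t ∈ A \ p.1, (1 - w t))
          * ((∏ t ∈ p.2, w t) * ∏ t ∈ B \ p.2, (1 - w t)) := by
    refine Finset.sum_nbij' (fun S => (S ∩ A, S ∩ B)) (fun p => p.1 ∪ p.2) ?_ ?_ ?_ ?_ ?_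
    · intro S hS
      simp only [mem_filter, mem_powerset, mem_product] at hS ⊢
      obtain ⟨hsub, hcard⟩ := hS
      refine ⟨⟨inter_subset_right, inter_subset_right⟩, ?_⟩
      have hdisj : Disjoint (S ∩ A) (S ∩ B) :=
        hAB.mono inter_subset_right inter_subset_right
      rw [← Finset.card_union_of_disjoint hdisj, ← Finset.inter_union_distrib_left,
        Finset.inter_eq_left.mpr hsub, hcard]
    · intro p hp
      simp only [mem_filter, mem_powerset, mem_product] at hp ⊢
      obtain ⟨⟨h1, h2⟩, hcard⟩ := hp
      refine ⟨Finset.union_subset_union h1 h2, ?_⟩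
      rw [Finset.card_union_of_disjoint (hAB.mono h1 h2), hcard]
    · intro S hS
      simp only [mem_filter, mem_powerset] at hS
      show S ∩ A ∪ S ∩ B = S
      rw [← Finset.inter_union_distrib_left, Finset.inter_eq_left.mpr hS.1]
    · intro p hp
      simp only [mem_filter, mem_powerset, mem_product] at hp
      obtain ⟨⟨h1, h2⟩, _⟩ := hp
      have hd := Finset.disjoint_left.mp hAB
      have e1 : (p.1 ∪ p.2) ∩ A = p.1 := by
        ext x
        simp only [Finset.mem_inter, Finset.mem_union]
        constructor
        · rintro ⟨h | h, hx⟩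
          · exact h
          · exact absurd hx (fun hx => hd hx (h2 h))
        · exact fun h => ⟨Or.inl h, h1 h⟩
      have e2 : (p.1 ∪ p.2) ∩ B = p.2 := by
        ext x
        simp only [Finset.mem_inter, Finset.mem_union]
        constructor
        · rintro ⟨h | h, hx⟩
          · exact absurd (h1 h) (fun hh => hd hh hx)
          · exact h
        · exact fun h => ⟨Or.inr h, h2 h⟩
      show ((p.1 ∪ p.2) ∩ A, (p.1 ∪ p.2) ∩ B) = p
      rw [e1, e2]
    · intro S hS
      simp only [mem_filter, mem_powerset] at hS
      have hdisj : Disjoint (S ∩ A) (S ∩ B) :=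
        hAB.mono inter_subset_right inter_subset_right
      have hw : ∏ t ∈ S, w t = (∏ t ∈ S ∩ A, w t) * ∏ t ∈ S ∩ B, w t := by
        rw [← Finset.prod_union hdisj, ← Finset.inter_union_distrib_left,
          Finset.inter_eq_left.mpr hS.1]
      have hA : A \ (S ∩ A) = A \ S := by
        ext x; simp only [Finset.mem_sdiff, Finset.mem_inter]; tauto
      have hB : B \ (S ∩ B) = B \ S := by
        ext x; simp only [Finset.mem_sdiff, Finset.mem_inter]; tauto
      have hsd : (A ∪ B) \ S = (A \ S) ∪ (B \ S) := Finset.union_sdiff_distrib ..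
      have hdisj2 : Disjoint (A \ S) (B \ S) :=
        hAB.mono sdiff_subset sdiff_subset
      rw [hw, hA, hB, hsd, Finset.prod_union hdisj2]
      ring
  rw [key]
  rw [← Finset.sum_fiberwise_of_maps_to (g := fun p => p.1.card)
      (t := Finset.range (k+1)) (fun p hp => by
        simp only [mem_filter] at hp; simp only [mem_range]; omega)]
  refine Finset.sum_congr rfl fun j hj => ?_
  simp only [mem_range] at hj
  have hfilter : ((A.powerset ×ˢ B.powerset).filter
        (fun p => p.1.card + p.2.card = k)).filter (fun p => p.1.card = j)
      = (A.powerset.filter (fun S => S.card = j)) ×ˢ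
        (B.powerset.filter (fun S => S.card = k - j)) := by
    ext p
    simp only [mem_filter, mem_product, mem_powerset]
    constructor
    · rintro ⟨⟨⟨h1, h2⟩, hc⟩, hj'⟩
      exact ⟨⟨h1, hj'⟩, ⟨h2, by omega⟩⟩
    · rintro ⟨⟨h1, hj'⟩, ⟨h2, hc⟩⟩
      exact ⟨⟨⟨h1, h2⟩, by omega⟩, hj'⟩
  rw [hfilter, Finset.sum_product, Finset.sum_mul_sum]

/-- The total probability of sampling fewer than `K` points from the corpus with point
`i` removed decomposes by how many sampled points rank above and below `i`:
it equals `∑_{k'=0}^{K-1} ∑_{j=0}^{k'} P_j(L_i) · P_{k'-j}(R_i)`. -/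
theorem small_subsets_prob_decomposition (M K : ℕ) (hK : 1 ≤ K)
    (w : Fin M → ℝ) (i : Fin M) :
    (∑ S ∈ ({i}ᶜ : Finset (Fin M)).powerset.filter (fun S => S.card ≤ K - 1),
        (∏ j ∈ S, w j) * ∏ j ∈ (S ∪ {i})ᶜ, (1 - w j))
      = ∑ k' ∈ Finset.range K, ∑ j ∈ Finset.range (k' + 1),
          subsetProb w j (Finset.Iio i) * subsetProb w (k' - j) (Finset.Ioi i) := by
  have hstep1 : (∑ S ∈ ({i}ᶜ : Finset (Fin M)).powerset.filter (fun S => S.card ≤ K - 1),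
        (∏ j ∈ S, w j) * ∏ j ∈ (S ∪ {i})ᶜ, (1 - w j))
      = ∑ S ∈ ({i}ᶜ : Finset (Fin M)).powerset.filter (fun S => S.card ≤ K - 1),
        (∏ j ∈ S, w j) * ∏ j ∈ ({i}ᶜ : Finset (Fin M)) \ S, (1 - w j) := by
    refine Finset.sum_congr rfl fun S hS => ?_
    simp only [mem_filter, mem_powerset] at hS
    have : (S ∪ {i} : Finset (Fin M))ᶜ = ({i}ᶜ : Finset (Fin M)) \ S := by
      ext x
      simp only [Finset.mem_compl, Finset.mem_union, Finset.mem_sdiff,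
        Finset.mem_singleton]
      tauto
    rw [this]
  rw [hstep1, sum_filter_card_le]
  have hK1 : K - 1 + 1 = K := by omega
  rw [hK1]
  refine Finset.sum_congr rfl fun k' _ => ?_
  have hcompl : ({i}ᶜ : Finset (Fin M)) = Finset.Iio i ∪ Finset.Ioi i := by
    ext x
    simp only [Finset.mem_compl, Finset.mem_union, Finset.mem_Iio, Finset.mem_Ioi,
      Finset.mem_singleton]
    constructor
    · exact fun h => lt_or_gt_of_ne h
    · rintro (h | h)
      · exact ne_of_lt h
      · exact ne_of_gt h
  have hdisj : Disjoint (Finset.Iio i) (Finset.Ioi i) := by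
    rw [Finset.disjoint_left]
    intro a ha hb
    simp only [Finset.mem_Iio, Finset.mem_Ioi] at ha hb
    exact absurd (ha.trans hb) (lt_irrefl a)
  rw [show (∑ S ∈ ({i}ᶜ : Finset (Fin M)).powerset.filter (fun S => S.card = k'),
      (∏ j ∈ S, w j) * ∏ j ∈ ({i}ᶜ : Finset (Fin M)) \ S, (1 - w j))
      = subsetProb w k' ({i}ᶜ : Finset (Fin M)) from rfl,
    hcompl, subsetProb_union w k' hdisj]
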